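/- For all integers n ≥ 2, m ≥ 1 and 0 ≤ r ≤ m, the set B = {d_m(i') : i' ∈ {0,…,n−1}^m, wt(i') ≤ r} is an F_2-basis of the dual Berman code C_n(r,m). -/

import Mathlib

open Finset

/-- The `l`-th subvector in the concatenation decomposition:
`(subvec v l) i' = v (i'|l)`. -/
def subvec {n m : ℕ} (v : (Fin (m + 1) → Fin n) → ZMod 2) (l : Fin n) :
    (Fin m → Fin n) → ZMod 2 :=
  fun i' => v (Fin.snoc i' l)

/-- The Berman code `D_n(r,m)`, defined recursively. -/
def BermanD (n : ℕ) : (m : ℕ) → ℕ → Set ((Fin m → Fin n) → ZMod 2)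
  | 0, _ => {0}
  | m + 1, r =>
    if r = 0 then {v | ∑ i, v i = 0}
    else if m + 1 ≤ r then {0}
    else {v | (∀ l : Fin n, subvec v l ∈ BermanD n m (r - 1)) ∧
              (fun i' => ∑ l : Fin n, subvec v l i') ∈ BermanD n m r}

/-- The dual Berman code `C_n(r,m)`, defined recursively. -/
def BermanC (n : ℕ) : (m : ℕ) → ℕ → Set ((Fin m → Fin n) → ZMod 2)
  | 0, _ => Set.univ
  | m + 1, r =>
    if r = 0 then {v | ∃ c : ZMod 2, ∀ i, v i = c}
    else if m + 1 ≤ r then Set.univ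
    else {v | ∃ (u : (Fin m → Fin n) → ZMod 2) (w : Fin n → (Fin m → Fin n) → ZMod 2),
            u ∈ BermanC n m r ∧
            (∀ l : Fin n, (l : ℕ) < n - 1 → w l ∈ BermanC n m (r - 1)) ∧
            (∀ l : Fin n, (l : ℕ) = n - 1 → w l = 0) ∧
            (∀ l : Fin n, subvec v l = u + w l)}

/-- Hamming weight of a binary vector. -/
def hwt {n m : ℕ} (v : (Fin m → Fin n) → ZMod 2) : ℕ :=
  (Finset.univ.filter fun i => v i ≠ 0).card

/-- `preceq j i` means `j ⪯ i`: for every position `k`, either `j k = 0` or `j k = i k`. -/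
def preceq {n m : ℕ} (j i : Fin m → Fin n) : Prop :=
  ∀ k, (j k : ℕ) = 0 ∨ j k = i k

instance {n m : ℕ} (j i : Fin m → Fin n) : Decidable (preceq j i) :=
  inferInstanceAs (Decidable (∀ k, (j k : ℕ) = 0 ∨ j k = i k))

/-- Hamming weight of an index tuple. -/
def wtTuple {n m : ℕ} (i : Fin m → Fin n) : ℕ :=
  (Finset.univ.filter fun k => (i k : ℕ) ≠ 0).card

/-- The vector `c_m(i')`: the indicator of `{i : i ⪯ i'}`. -/
def cVec {n : ℕ} (m : ℕ) (i' : Fin m → Fin n) : (Fin m → Fin n) → ZMod 2 :=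
  fun i => if preceq i i' then 1 else 0

/-- The vector `d_m(i')`: the indicator of `{i : i' ⪯ i}`. -/
def dVec {n : ℕ} (m : ℕ) (i' : Fin m → Fin n) : (Fin m → Fin n) → ZMod 2 :=
  fun i => if preceq i' i then 1 else 0

/-- The matrix `A_m = A_1^{⊗m}`: its entry in row `i` and column `j` is `1` iff `j ⪯ i`. -/
def Amat (n m : ℕ) : Matrix (Fin m → Fin n) (Fin m → Fin n) (ZMod 2) :=
  fun i j => if preceq j i then 1 else 0

lemma preceq_snoc {n m : ℕ} (j' i' : Fin m → Fin n) (a l : Fin n) :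
    preceq (Fin.snoc j' a) (Fin.snoc i' l) ↔ preceq j' i' ∧ ((a : ℕ) = 0 ∨ a = l) := by
  constructor
  · intro h
    refine ⟨fun k => ?_, ?_⟩
    · have := h k.castSucc; simpa [Fin.snoc_castSucc] using this
    · have := h (Fin.last m); simpa [Fin.snoc_last] using this
  · rintro ⟨h1, h2⟩ k
    refine Fin.lastCases ?_ ?_ k
    · simpa [Fin.snoc_last] using h2
    · intro k; simpa [Fin.snoc_castSucc] using h1 k

lemma preceq_snoc' {n m : ℕ} (j' : Fin m → Fin n) (a : Fin n) (i : Fin (m+1) → Fin n) :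
    preceq (Fin.snoc j' a) i ↔ preceq j' (Fin.init i) ∧ ((a : ℕ) = 0 ∨ a = i (Fin.last m)) := by
  conv_lhs => rw [← Fin.snoc_init_self i]
  rw [preceq_snoc]

lemma subvec_snoc {n m : ℕ} (j' : Fin m → Fin n) (a l : Fin n) :
    subvec (dVec (m+1) (Fin.snoc j' a)) l
      = if ((a : ℕ) = 0 ∨ a = l) then dVec m j' else 0 := by
  funext i
  simp only [subvec, dVec, preceq_snoc, Fin.init_snoc, Fin.snoc_last]
  by_cases hp : preceq j' i <;> by_cases ha : ((a:ℕ) = 0 ∨ a = l) <;>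
    simp [dVec, hp, ha]

lemma wtTuple_snoc {n m : ℕ} (j' : Fin m → Fin n) (a : Fin n) :
    wtTuple (Fin.snoc j' a) = wtTuple j' + if (a : ℕ) = 0 then 0 else 1 := by
  unfold wtTuple
  rw [Finset.card_filter, Finset.card_filter, Fin.sum_univ_castSucc]
  simp only [Fin.snoc_castSucc, Fin.snoc_last]
  by_cases h : (a : ℕ) = 0 <;> simp [h]

/-- Linear map placing `u` in block `a` (and `0` elsewhere). -/
def extAtL {n : ℕ} (m : ℕ) (a : Fin n) :
    ((Fin m → Fin n) → ZMod 2) →ₗ[ZMod 2] ((Fin (m+1) → Fin n) → ZMod 2) where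
  toFun u := fun i => if i (Fin.last m) = a then u (Fin.init i) else 0
  map_add' u v := by funext i; by_cases h : i (Fin.last m) = a <;> simp [h]
  map_smul' c u := by funext i; by_cases h : i (Fin.last m) = a <;> simp [h]

lemma sum_extAt {n m : ℕ} (v : (Fin (m+1) → Fin n) → ZMod 2) :
    ∑ a : Fin n, extAtL m a (subvec v a) = v := by
  funext i
  rw [Finset.sum_apply]
  simp only [extAtL, LinearMap.coe_mk, AddHom.coe_mk]
  rw [Finset.sum_ite_eq univ (i (Fin.last m)) (fun a => subvec v a (Fin.init i))]
  simp [subvec, Fin.snoc_init_self]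

lemma extAt_dVec {n m : ℕ} (j' : Fin m → Fin n) (a : Fin n) (ha : (a : ℕ) ≠ 0) :
    extAtL m a (dVec m j') = dVec (m+1) (Fin.snoc j' a) := by
  funext i
  simp only [extAtL, LinearMap.coe_mk, AddHom.coe_mk, dVec, preceq_snoc']
  by_cases h : i (Fin.last m) = a
  · by_cases hp : preceq j' (Fin.init i) <;> simp [h, hp, ha, Fin.ext_iff]
  · have : ¬ a = i (Fin.last m) := fun hh => h hh.symm
    simp [h, ha, this]

lemma sum_extAt_dVec {n m : ℕ} (j' : Fin m → Fin n) (a₀ : Fin n) (h : (a₀ : ℕ) = 0) :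
    ∑ a : Fin n, extAtL (n := n) m a (dVec m j') = dVec (m+1) (Fin.snoc j' a₀) := by
  rw [← sum_extAt (dVec (m+1) (Fin.snoc j' a₀))]
  refine Finset.sum_congr rfl fun a _ => ?_
  rw [subvec_snoc]
  simp [h]

lemma extAt_mem_span {n m : ℕ} (a : Fin n) (s : ℕ)
    {u : (Fin m → Fin n) → ZMod 2}
    (hu : u ∈ Submodule.span (ZMod 2) (dVec (n := n) m '' {i' | wtTuple i' ≤ s})) :
    extAtL m a u ∈
      Submodule.span (ZMod 2) (dVec (n := n) (m+1) '' {i' | wtTuple i' ≤ s + 1}) := by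
  have h : Submodule.map (extAtL (n := n) m a)
      (Submodule.span (ZMod 2) (dVec (n := n) m '' {i' | wtTuple i' ≤ s}))
      ≤ Submodule.span (ZMod 2) (dVec (n := n) (m+1) '' {i' | wtTuple i' ≤ s + 1}) := by
    rw [Submodule.map_span_le]
    rintro x ⟨j', hj', rfl⟩
    have hj'' : wtTuple j' ≤ s := hj'
    by_cases ha : (a : ℕ) = 0
    · have key : extAtL (n := n) m a (dVec m j')
          = dVec (m+1) (Fin.snoc j' a)
            - ∑ a' ∈ univ.erase a, extAtL (n := n) m a' (dVec m j') := by
        rw [← sum_extAt_dVec j' a ha, eq_sub_iff_add_eq]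
        exact Finset.univ.add_sum_erase (fun a' => extAtL (n := n) m a' (dVec m j')) (Finset.mem_univ a)
      rw [key]
      refine sub_mem (Submodule.subset_span ⟨Fin.snoc j' a, ?_, rfl⟩)
        (Submodule.sum_mem _ fun a' ha' => ?_)
      · show wtTuple _ ≤ s + 1
        rw [wtTuple_snoc]; split_ifs <;> omega
      · have ha'0 : (a' : ℕ) ≠ 0 := by
          intro h0
          exact (Finset.mem_erase.mp ha').1 (Fin.ext (by omega))
        rw [extAt_dVec j' a' ha'0]
        refine Submodule.subset_span ⟨Fin.snoc j' a', ?_, rfl⟩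
        show wtTuple _ ≤ s + 1
        rw [wtTuple_snoc]; split_ifs <;> omega
    · rw [extAt_dVec j' a ha]
      refine Submodule.subset_span ⟨Fin.snoc j' a, ?_, rfl⟩
      show wtTuple _ ≤ s + 1
      rw [wtTuple_snoc]; split_ifs <;> omega
  exact h ⟨u, hu, rfl⟩

lemma sumExt_mem_span {n m : ℕ} (hn : 0 < n) (s : ℕ)
    {u : (Fin m → Fin n) → ZMod 2}
    (hu : u ∈ Submodule.span (ZMod 2) (dVec (n := n) m '' {i' | wtTuple i' ≤ s})) :
    (∑ a : Fin n, extAtL m a u) ∈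
      Submodule.span (ZMod 2) (dVec (n := n) (m+1) '' {i' | wtTuple i' ≤ s}) := by
  have h : Submodule.map (∑ a : Fin n, extAtL (n := n) m a)
      (Submodule.span (ZMod 2) (dVec (n := n) m '' {i' | wtTuple i' ≤ s}))
      ≤ Submodule.span (ZMod 2) (dVec (n := n) (m+1) '' {i' | wtTuple i' ≤ s}) := by
    rw [Submodule.map_span_le]
    rintro x ⟨j', hj', rfl⟩
    have hj'' : wtTuple j' ≤ s := hj'
    rw [LinearMap.sum_apply, sum_extAt_dVec j' ⟨0, hn⟩ rfl]
    refine Submodule.subset_span ⟨Fin.snoc j' ⟨0, hn⟩, ?_, rfl⟩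
    show wtTuple _ ≤ s
    rw [wtTuple_snoc]; simp
    omega
  have := h ⟨u, hu, rfl⟩
  simpa [LinearMap.sum_apply] using this

lemma bermanC_succ {n m r : ℕ} (h0 : r ≠ 0) (h1 : ¬ (m + 1 ≤ r)) :
    BermanC n (m+1) r
      = {v | ∃ (u : (Fin m → Fin n) → ZMod 2) (w : Fin n → (Fin m → Fin n) → ZMod 2),
            u ∈ BermanC n m r ∧
            (∀ l : Fin n, (l : ℕ) < n - 1 → w l ∈ BermanC n m (r - 1)) ∧
            (∀ l : Fin n, (l : ℕ) = n - 1 → w l = 0) ∧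
            (∀ l : Fin n, subvec v l = u + w l)} := by
  simp only [BermanC, if_neg h0, if_neg h1]

lemma bermanC_self {n : ℕ} (m : ℕ) : BermanC n m m = Set.univ := by
  cases m with
  | zero => simp [BermanC]
  | succ k => simp [BermanC]

lemma charTwoPi {n m : ℕ} (x : (Fin m → Fin n) → ZMod 2) : x + x = 0 := by
  funext i
  show x i + x i = 0
  have : (2 : ZMod 2) = 0 := rfl
  rw [← two_mul, this, zero_mul]

theorem spanC (n : ℕ) (hn : 2 ≤ n) :
    ∀ m r, r ≤ m →
      (↑(Submodule.span (ZMod 2) (dVec (n := n) m '' {i' | wtTuple i' ≤ r})) :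
        Set ((Fin m → Fin n) → ZMod 2)) = BermanC n m r := by
  intro m
  induction m with
  | zero =>
    intro r hr
    have hr0 : r = 0 := Nat.le_zero.mp hr
    subst hr0
    have : BermanC n 0 0 = Set.univ := by simp [BermanC]
    rw [this]
    rw [Set.eq_univ_iff_forall]
    intro v
    set d : Fin 0 → Fin n := fun k => k.elim0 with hd
    have hpre : ∀ i : Fin 0 → Fin n, preceq d i := fun i k => k.elim0
    have h1 : dVec (n := n) 0 d = fun _ => (1 : ZMod 2) := by
      funext i; simp [dVec, hpre i]
    have hv : v = v d • dVec (n := n) 0 d := by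
      funext i
      have : i = d := funext fun k => k.elim0
      rw [h1, this]
      simp
    show v ∈ Submodule.span (ZMod 2) _
    rw [hv]
    refine Submodule.smul_mem _ _ (Submodule.subset_span ⟨d, ?_, rfl⟩)
    show wtTuple d ≤ 0
    simp [wtTuple]
  | succ m IH =>
    intro r hr
    by_cases hr0 : r = 0
    · subst hr0
      have hB : BermanC n (m+1) 0 = {v | ∃ c : ZMod 2, ∀ i, v i = c} := by
        simp [BermanC]
      rw [hB]
      have hzn : 0 < n := by omega
      set z : Fin (m+1) → Fin n := fun _ => ⟨0, hzn⟩ with hz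
      have hset : {i' : Fin (m+1) → Fin n | wtTuple i' ≤ 0} = {z} := by
        ext j
        simp only [Set.mem_setOf_eq, Set.mem_singleton_iff, Nat.le_zero, wtTuple,
          Finset.card_eq_zero, Finset.filter_eq_empty_iff, Finset.mem_univ, true_implies,
          not_not, funext_iff, hz, Fin.ext_iff]
      have hdz : dVec (n := n) (m+1) z = fun _ => (1 : ZMod 2) := by
        funext i
        have : preceq z i := fun k => Or.inl rfl
        simp [dVec, this]
      rw [hset, Set.image_singleton, hdz]
      ext v
      simp only [SetLike.mem_coe, Submodule.mem_span_singleton, Set.mem_setOf_eq]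
      constructor
      · rintro ⟨c, rfl⟩
        exact ⟨c, fun i => by simp⟩
      · rintro ⟨c, hc⟩
        exact ⟨c, funext fun i => by simp [hc i]⟩
    · by_cases hr1 : m + 1 ≤ r
      · have hrm : r = m + 1 := le_antisymm hr hr1
        subst hrm
        have hB : BermanC n (m+1) (m+1) = Set.univ := bermanC_self (m+1)
        rw [hB, Set.eq_univ_iff_forall]
        intro v
        show v ∈ Submodule.span (ZMod 2) _
        rw [← sum_extAt v]
        refine Submodule.sum_mem _ fun a _ => ?_
        have hsub : subvec v a ∈
            Submodule.span (ZMod 2) (dVec (n := n) m '' {i' | wtTuple i' ≤ m}) := by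
          have := IH m le_rfl
          rw [bermanC_self m] at this
          have : subvec v a ∈
              (↑(Submodule.span (ZMod 2) (dVec (n := n) m '' {i' | wtTuple i' ≤ m})) :
                Set _) := by rw [this]; trivial
          exact this
        exact extAt_mem_span a m hsub
      · -- main case : 1 ≤ r ≤ m
        have hr' : r ≤ m := by omega
        have hr1' : 1 ≤ r := by omega
        have hrm1 : r - 1 ≤ m := by omega
        have hrsub : r - 1 + 1 = r := by omega
        -- membership transfers via IH
        have memr : ∀ x, x ∈ Submodule.span (ZMod 2)
              (dVec (n := n) m '' {i' | wtTuple i' ≤ r}) ↔ x ∈ BermanC n m r := by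
          intro x; rw [← IH r hr']; rfl
        have memr1 : ∀ x, x ∈ Submodule.span (ZMod 2)
              (dVec (n := n) m '' {i' | wtTuple i' ≤ r - 1}) ↔ x ∈ BermanC n m (r-1) := by
          intro x; rw [← IH (r-1) hrm1]; rfl
        have dmem : ∀ s, s ≤ m → ∀ j' : Fin m → Fin n, wtTuple j' ≤ s →
            dVec (n := n) m j' ∈ BermanC n m s := by
          intro s hs j' hw
          rw [← IH s hs]
          exact Submodule.subset_span ⟨j', hw, rfl⟩
        have zmem : ∀ s, s ≤ m → (0 : (Fin m → Fin n) → ZMod 2) ∈ BermanC n m s := by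
          intro s hs
          rw [← IH s hs]
          exact Submodule.zero_mem _
        apply Set.Subset.antisymm
        · -- span ⊆ BermanC
          intro v hv
          refine Submodule.span_induction
            (p := fun x _ => x ∈ BermanC n (m+1) r) ?_ ?_ ?_ ?_ hv
          · rintro x ⟨j, hj, rfl⟩
            have hj' : wtTuple j ≤ r := hj
            obtain ⟨j', a, rfl⟩ : ∃ j' a, j = Fin.snoc j' a :=
              ⟨Fin.init j, j (Fin.last m), (Fin.snoc_init_self j).symm⟩
            rw [wtTuple_snoc] at hj'
            rw [bermanC_succ hr0 hr1]
            by_cases ha : (a : ℕ) = 0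
            · rw [if_pos ha] at hj'
              refine ⟨dVec m j', fun _ => 0, dmem r hr' j' (by omega),
                fun l _ => zmem (r-1) hrm1, fun l _ => rfl, fun l => ?_⟩
              rw [subvec_snoc]
              simp [ha]
            · rw [if_neg ha] at hj'
              by_cases ha2 : (a : ℕ) = n - 1
              · refine ⟨dVec m j', fun l => if l = a then 0 else dVec m j',
                  dmem r hr' j' (by omega), ?_, ?_, ?_⟩
                · intro l hl
                  by_cases h : l = a
                  · simpa [h] using zmem (r-1) hrm1
                  · simpa [h] using dmem (r-1) hrm1 j' (by omega)
                · intro l hl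
                  have : l = a := Fin.ext (by omega)
                  simp [this]
                · intro l
                  rw [subvec_snoc]
                  by_cases h : l = a
                  · simp [h, ha]
                  · have h2 : ¬ a = l := fun e => h e.symm
                    simp only [ha, h2, or_self, if_neg, if_neg h, false_or]
                    rw [← charTwoPi (dVec (n := n) m j')]
                    simp [h2]
              · refine ⟨0, fun l => if l = a then dVec m j' else 0,
                  zmem r hr', ?_, ?_, ?_⟩
                · intro l hl
                  by_cases h : l = a
                  · simpa [h] using dmem (r-1) hrm1 j' (by omega)
                  · simpa [h] using zmem (r-1) hrm1
                · intro l hl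
                  have : ¬ l = a := by
                    intro e; apply ha2; rw [← e]; exact hl
                  simp [this]
                · intro l
                  rw [subvec_snoc]
                  by_cases h : l = a
                  · simp [h, ha]
                  · have h2 : ¬ a = l := fun e => h e.symm
                    simp [ha, h2, h]
          · rw [bermanC_succ hr0 hr1]
            exact ⟨0, fun _ => 0, zmem r hr', fun l _ => zmem (r-1) hrm1,
              fun l _ => rfl, fun l => by show subvec 0 l = 0 + 0; rw [add_zero]; rfl⟩
          · intro x y hx hy hxB hyB
            rw [bermanC_succ hr0 hr1] at hxB hyB ⊢
            obtain ⟨u1, w1, h1, h2, h3, h4⟩ := hxB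
            obtain ⟨u2, w2, g1, g2, g3, g4⟩ := hyB
            refine ⟨u1 + u2, fun l => w1 l + w2 l, ?_, ?_, ?_, ?_⟩
            · rw [← memr] at h1 g1 ⊢
              exact Submodule.add_mem _ h1 g1
            · intro l hl
              rw [← memr1]
              exact Submodule.add_mem _ ((memr1 _).mpr (h2 l hl))
                ((memr1 _).mpr (g2 l hl))
            · intro l hl
              show w1 l + w2 l = 0
              rw [h3 l hl, g3 l hl, add_zero]
            · intro l
              show subvec x l + subvec y l = _
              rw [h4 l, g4 l]
              exact add_add_add_comm _ _ _ _
          · intro c x hx hxB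
            rw [bermanC_succ hr0 hr1] at hxB ⊢
            obtain ⟨u1, w1, h1, h2, h3, h4⟩ := hxB
            refine ⟨c • u1, fun l => c • w1 l, ?_, ?_, ?_, ?_⟩
            · rw [← memr] at h1 ⊢
              exact Submodule.smul_mem _ _ h1
            · intro l hl
              rw [← memr1]
              exact Submodule.smul_mem _ _ (by rw [memr1]; exact h2 l hl)
            · intro l hl
              show c • w1 l = 0
              rw [h3 l hl, smul_zero]
            · intro l
              show c • subvec x l = _
              rw [h4 l, smul_add]
        · -- BermanC ⊆ span
          intro v hv
          rw [bermanC_succ hr0 hr1] at hv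
          obtain ⟨u, w, hu, hw, hw0, hsub⟩ := hv
          show v ∈ Submodule.span (ZMod 2) _
          have hv2 : v = (∑ a : Fin n, extAtL m a u) + ∑ a : Fin n, extAtL m a (w a) := by
            conv_lhs => rw [← sum_extAt v]
            rw [← Finset.sum_add_distrib]
            refine Finset.sum_congr rfl fun a _ => ?_
            rw [hsub a, map_add]
          rw [hv2]
          refine Submodule.add_mem _ ?_ (Submodule.sum_mem _ fun a _ => ?_)
          · exact sumExt_mem_span (by omega) r ((memr u).mpr hu)
          · by_cases hlt : (a : ℕ) < n - 1
            · have := extAt_mem_span a (r-1) ((memr1 (w a)).mpr (hw a hlt))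
              rwa [hrsub] at this
            · have hval : (a : ℕ) = n - 1 := by have := a.isLt; omega
              rw [hw0 a hval, map_zero]
              exact Submodule.zero_mem _

/-- `{d_m(i') : wt(i') ≤ r}` is an `F_2`-basis of `C_n(r,m)`. -/
theorem berman_basis_C (n m r : ℕ) (hn : 2 ≤ n) (hm : 1 ≤ m) (hr : r ≤ m) :
    LinearIndependent (ZMod 2)
      (fun i' : {i' : Fin m → Fin n // wtTuple i' ≤ r} => dVec (n := n) m i'.1) ∧
    (↑(Submodule.span (ZMod 2)
        (dVec (n := n) m '' {i' : Fin m → Fin n | wtTuple i' ≤ r})) :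
      Set ((Fin m → Fin n) → ZMod 2)) = BermanC n m r := by
  constructor
  · have h := spanC n hn m m le_rfl
    rw [bermanC_self] at h
    have htop : ⊤ ≤ Submodule.span (ZMod 2) (Set.range (dVec (n := n) m)) := by
      intro x _
      have hx : x ∈ (↑(Submodule.span (ZMod 2)
          (dVec (n := n) m '' {i' : Fin m → Fin n | wtTuple i' ≤ m})) :
          Set ((Fin m → Fin n) → ZMod 2)) := by rw [h]; trivial
      exact Submodule.span_mono (Set.image_subset_range _ _) hx
    have hcard : Fintype.card (Fin m → Fin n)
        = Module.finrank (ZMod 2) ((Fin m → Fin n) → ZMod 2) :=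
      (Module.finrank_pi _).symm
    exact (linearIndependent_of_top_le_span_of_card_eq_finrank htop hcard).comp
      Subtype.val Subtype.val_injective
  · exact spanC n hn m r hr
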